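/- If a k-uniform hypergraph H has the μ-fractional property and there exists a hypergraph homomorphism ψ from a k-uniform hypergraph G to H, then G also has the μ-fractional property. -/
import Mathlib


/-- A set of vertices is independent if it contains no edge. -/
def HypIndep {α : Type*} (E : Finset (Finset α)) (Z : Finset α) : Prop :=
  ∀ e ∈ E, ¬ e ⊆ Z

/-- The μ-fractional property of a hypergraph with vertex set `V` and edge set `E`. -/
def FracProp {α : Type*} (V : Finset α) (E : Finset (Finset α)) (μ : ℝ) : Prop :=
  ∀ w : α → ℝ, (∀ i, 0 ≤ w i) →
    ∃ Z ⊆ V, HypIndep E Z ∧ μ * ∑ i ∈ V, w i ≤ ∑ i ∈ Z, w i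

theorem homomorphism_preserves_fracProp
    {α β : Type*} [DecidableEq α] [DecidableEq β] (k : ℕ) (μ : ℝ)
    (hμ0 : 0 < μ) (hμ1 : μ ≤ 1)
    (VG : Finset α) (EG : Finset (Finset α)) (VH : Finset β) (EH : Finset (Finset β))
    (hGuniform : ∀ e ∈ EG, e.card = k) (hHuniform : ∀ e ∈ EH, e.card = k)
    (hGedges : ∀ e ∈ EG, e ⊆ VG) (hHedges : ∀ e ∈ EH, e ⊆ VH)
    (ψ : α → β) (hψV : ∀ i ∈ VG, ψ i ∈ VH)
    (hψE : ∀ e ∈ EG, e.image ψ ∈ EH)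
    (hH : FracProp VH EH μ) :
    FracProp VG EG μ := by
  intro w hw
  -- pushforward weights
  set w' : β → ℝ := fun b => ∑ i ∈ VG.filter (fun i => ψ i = b), w i with hw'
  have hw'nonneg : ∀ b, 0 ≤ w' b := fun b => Finset.sum_nonneg fun i _ => hw i
  obtain ⟨Z', hZ'sub, hZ'indep, hZ'sum⟩ := hH w' hw'nonneg
  refine ⟨VG.filter (fun i => ψ i ∈ Z'), Finset.filter_subset _ _, ?_, ?_⟩
  · intro e he hsub
    refine hZ'indep (e.image ψ) (hψE e he) ?_
    intro b hb
    obtain ⟨i, hi, rfl⟩ := Finset.mem_image.mp hb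
    exact (Finset.mem_filter.mp (hsub hi)).2
  · have htot : ∑ b ∈ VH, w' b = ∑ i ∈ VG, w i :=
      Finset.sum_fiberwise_of_maps_to hψV w
    have hpull : ∑ b ∈ Z', w' b = ∑ i ∈ VG.filter (fun i => ψ i ∈ Z'), w i := by
      have : ∀ i ∈ VG.filter (fun i => ψ i ∈ Z'), ψ i ∈ Z' := fun i hi =>
        (Finset.mem_filter.mp hi).2
      have h2 := Finset.sum_fiberwise_of_maps_to this w
      rw [← h2]
      refine Finset.sum_congr rfl fun b hb => Finset.sum_congr ?_ fun _ _ => rfl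
      ext i
      simp only [Finset.mem_filter]
      constructor
      · rintro ⟨hi, heq⟩; exact ⟨⟨hi, heq ▸ hb⟩, heq⟩
      · rintro ⟨⟨hi, _⟩, heq⟩; exact ⟨hi, heq⟩
    rw [← hpull, ← htot]
    exact hZ'sum
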